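/- arXiv:1406.5366 — 3 statements merged into one kernel-verified Lean document; each statement's English description precedes it below -/
import Mathlib

section
/- Let A and B be n×n real symmetric matrices, and let μ₁ ≤ μ₂ ≤ … ≤ μₙ and ν₁ ≤ ν₂ ≤ … ≤ νₙ be the eigenvalues of A and B respectively, listed with multiplicity in nondecreasing order. Then for every l = 1, …, n, |μ_l − ν_l| ≤ n · max_{1≤i,j≤n} |A_{ij} − B_{ij}|. -/
open scoped RealInnerProductSpace


lemma coeffA {n : ℕ} {A : Matrix (Fin n) (Fin n) ℝ} (hA : A.IsHermitian)
    (x : EuclideanSpace ℝ (Fin n)) (i : Fin n) :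
    ⟪hA.eigenvectorBasis i, Matrix.toEuclideanLin A x⟫
      = hA.eigenvalues i * ⟪hA.eigenvectorBasis i, x⟫ := by
  have hsymm := (Matrix.isHermitian_iff_isSymmetric.mp hA)
  have h1 : Matrix.toEuclideanLin A (hA.eigenvectorBasis i)
      = hA.eigenvalues i • hA.eigenvectorBasis i := by
    apply (WithLp.equiv 2 _).injective
    simp [Matrix.ofLp_toEuclideanLin_apply, hA.mulVec_eigenvectorBasis]
  calc ⟪hA.eigenvectorBasis i, Matrix.toEuclideanLin A x⟫
      = ⟪Matrix.toEuclideanLin A (hA.eigenvectorBasis i), x⟫ := (hsymm _ _).symm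
    _ = _ := by rw [h1, real_inner_smul_left]

lemma inner_expand {n : ℕ} (b : OrthonormalBasis (Fin n) ℝ (EuclideanSpace ℝ (Fin n)))
    (x y : EuclideanSpace ℝ (Fin n)) :
    ⟪x, y⟫ = ∑ i, ⟪b i, x⟫ * ⟪b i, y⟫ := by
  conv_lhs => rw [← b.sum_repr x]
  rw [sum_inner]
  refine Finset.sum_congr rfl fun i _ => ?_
  rw [real_inner_smul_left, b.repr_apply_apply]

lemma coeff_vanish {n : ℕ} (b : OrthonormalBasis (Fin n) ℝ (EuclideanSpace ℝ (Fin n)))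
    {ι : Type} (f : ι → Fin n) {x : EuclideanSpace ℝ (Fin n)}
    (hx : x ∈ Submodule.span ℝ (Set.range (⇑b ∘ f))) {i : Fin n} (hi : i ∉ Set.range f) :
    ⟪b i, x⟫ = 0 := by
  induction hx using Submodule.span_induction with
  | mem y hy =>
    obtain ⟨j, rfl⟩ := hy
    exact b.orthonormal.2 (fun h => hi ⟨j, h.symm⟩)
  | zero => simp
  | add y z _ _ hy hz => rw [inner_add_right, hy, hz, add_zero]
  | smul c y _ hy => rw [real_inner_smul_right, hy, mul_zero]

lemma quad_le {n : ℕ} {A : Matrix (Fin n) (Fin n) ℝ} (hA : A.IsHermitian)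
    {ι : Type} [Fintype ι] (f : ι → Fin n) (c : ℝ)
    (hc : ∀ j : ι, hA.eigenvalues (f j) ≤ c)
    (x : EuclideanSpace ℝ (Fin n))
    (hx : x ∈ Submodule.span ℝ (Set.range (⇑hA.eigenvectorBasis ∘ f))) :
    ⟪x, Matrix.toEuclideanLin A x⟫ ≤ c * ⟪x, x⟫ := by
  rw [inner_expand hA.eigenvectorBasis x (Matrix.toEuclideanLin A x),
      inner_expand hA.eigenvectorBasis x x]
  simp only [coeffA]
  rw [Finset.mul_sum]
  apply Finset.sum_le_sum
  intro i _
  by_cases h : i ∈ Set.range f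
  · obtain ⟨j, rfl⟩ := h
    nlinarith [hc j, sq_nonneg ⟪hA.eigenvectorBasis (f j), x⟫]
  · rw [coeff_vanish hA.eigenvectorBasis f hx h]
    simp

lemma quad_ge {n : ℕ} {A : Matrix (Fin n) (Fin n) ℝ} (hA : A.IsHermitian)
    {ι : Type} [Fintype ι] (f : ι → Fin n) (c : ℝ)
    (hc : ∀ j : ι, c ≤ hA.eigenvalues (f j))
    (x : EuclideanSpace ℝ (Fin n))
    (hx : x ∈ Submodule.span ℝ (Set.range (⇑hA.eigenvectorBasis ∘ f))) :
    c * ⟪x, x⟫ ≤ ⟪x, Matrix.toEuclideanLin A x⟫ := by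
  rw [inner_expand hA.eigenvectorBasis x (Matrix.toEuclideanLin A x),
      inner_expand hA.eigenvectorBasis x x]
  simp only [coeffA]
  rw [Finset.mul_sum]
  apply Finset.sum_le_sum
  intro i _
  by_cases h : i ∈ Set.range f
  · obtain ⟨j, rfl⟩ := h
    nlinarith [hc j, sq_nonneg ⟪hA.eigenvectorBasis (f j), x⟫]
  · rw [coeff_vanish hA.eigenvectorBasis f hx h]
    simp

lemma entry_bound {n : ℕ} (M : Matrix (Fin n) (Fin n) ℝ) (K : ℝ) (hK0 : 0 ≤ K)
    (hK : ∀ i j, |M i j| ≤ K) (x : EuclideanSpace ℝ (Fin n)) :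
    ⟪x, Matrix.toEuclideanLin M x⟫ ≤ (n : ℝ) * K * ⟪x, x⟫ := by
  have hxx : ⟪x, x⟫ = ∑ i, x i * x i := by
    rw [PiLp.inner_apply]; simp [RCLike.inner_apply, pow_two]
  have hexp : ⟪x, Matrix.toEuclideanLin M x⟫ = ∑ i, x i * ∑ j, M i j * x j := by
    rw [Matrix.toEuclideanLin_apply, PiLp.inner_apply]
    simp [RCLike.inner_apply, Matrix.mulVec, dotProduct]
    exact Finset.sum_congr rfl fun i _ => mul_comm _ _
  rw [hexp, hxx]
  calc ∑ i, x i * ∑ j, M i j * x j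
      ≤ ∑ i, ∑ j, |x i| * (K * |x j|) := by
        apply Finset.sum_le_sum
        intro i _
        rw [Finset.mul_sum]
        apply Finset.sum_le_sum
        intro j _
        calc x i * (M i j * x j) ≤ |x i * (M i j * x j)| := le_abs_self _
          _ = |x i| * (|M i j| * |x j|) := by rw [abs_mul, abs_mul]
          _ ≤ |x i| * (K * |x j|) :=
            mul_le_mul_of_nonneg_left
              (mul_le_mul_of_nonneg_right (hK i j) (abs_nonneg _)) (abs_nonneg _)
    _ = K * (∑ i, |x i|) ^ 2 := by
        rw [sq, Finset.sum_mul_sum]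
        rw [Finset.mul_sum]
        apply Finset.sum_congr rfl
        intro i _
        rw [Finset.mul_sum]
        apply Finset.sum_congr rfl
        intro j _
        ring
    _ ≤ K * ((n : ℝ) * ∑ i, |x i| ^ 2) := by
        apply mul_le_mul_of_nonneg_left _ hK0
        have := sq_sum_le_card_mul_sum_sq (s := (Finset.univ : Finset (Fin n)))
          (f := fun i => |x i|)
        simpa using this
    _ = (n : ℝ) * K * ∑ i, x i * x i := by
        rw [Finset.mul_sum, Finset.mul_sum, Finset.mul_sum]
        apply Finset.sum_congr rfl
        intro i _
        rw [sq_abs]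
        ring

lemma weyl_aux {n : ℕ} (A B : Matrix (Fin n) (Fin n) ℝ)
    (hA : A.IsHermitian) (hB : B.IsHermitian)
    (μ ν : Fin n → ℝ) (σA σB : Equiv.Perm (Fin n))
    (hμ : μ = hA.eigenvalues ∘ σA) (hμmono : Monotone μ)
    (hν : ν = hB.eigenvalues ∘ σB) (hνmono : Monotone ν)
    (l : Fin n) : ν l - μ l ≤ n * ⨆ i, ⨆ j, |A i j - B i j| := by
  set K := ⨆ i, ⨆ j, |A i j - B i j| with hKdef
  have hb1 : ∀ i, (⨆ j, |A i j - B i j|) ≤ K :=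
    fun i => le_ciSup (f := fun i => ⨆ j, |A i j - B i j|)
      (Set.Finite.bddAbove (Set.finite_range _)) i
  have hK : ∀ i j, |A i j - B i j| ≤ K := fun i j =>
    le_trans (le_ciSup (f := fun j => |A i j - B i j|) (Set.Finite.bddAbove (Set.finite_range _)) j) (hb1 i)
  have hK0 : 0 ≤ K := le_trans (abs_nonneg _) (hK l l)
  -- index maps
  set gA : Fin (l.1 + 1) → Fin n := fun i => σA (Fin.castLE l.2 i) with hgAdef
  set gB : Fin (n - l.1) → Fin n := fun j => σB ⟨l.1 + j.1, by have := j.2; omega⟩ with hgBdef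
  have hgAinj : Function.Injective gA :=
    σA.injective.comp (Fin.castLE_injective _)
  have hgBinj : Function.Injective gB := by
    intro a b h
    have h2 : l.1 + a.1 = l.1 + b.1 := congrArg Fin.val (σB.injective h)
    exact Fin.ext (by omega)
  set U := Submodule.span ℝ (Set.range (⇑hA.eigenvectorBasis ∘ gA)) with hUdef
  set V := Submodule.span ℝ (Set.range (⇑hB.eigenvectorBasis ∘ gB)) with hVdef
  have hU : Module.finrank ℝ U = l.1 + 1 := by
    rw [finrank_span_eq_card ((hA.eigenvectorBasis.orthonormal.comp gA hgAinj).linearIndependent)]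
    simp
  have hV : Module.finrank ℝ V = n - l.1 := by
    rw [finrank_span_eq_card ((hB.eigenvectorBasis.orthonormal.comp gB hgBinj).linearIndependent)]
    simp
  have hUV : 0 < Module.finrank ℝ ↥(U ⊓ V) := by
    have h1 := Submodule.finrank_sup_add_finrank_inf_eq U V
    have h2 : Module.finrank ℝ ↥(U ⊔ V) ≤ n := by
      simpa using Submodule.finrank_le (U ⊔ V)
    have hl := l.2
    omega
  obtain ⟨⟨x, hxUV⟩, hx0⟩ := Module.finrank_pos_iff_exists_ne_zero.mp hUV
  have hx : x ≠ 0 := fun h => hx0 (Subtype.ext h)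
  have hxU : x ∈ U := hxUV.1
  have hxV : x ∈ V := hxUV.2
  -- eigenvalue bounds
  have hc1 : ∀ j : Fin (l.1 + 1), hA.eigenvalues (gA j) ≤ μ l := by
    intro j
    have h1 : μ (Fin.castLE l.2 j) ≤ μ l := hμmono (by
      rw [Fin.le_def]
      simpa using Nat.lt_succ_iff.mp j.2)
    have h2 : hA.eigenvalues (gA j) = μ (Fin.castLE l.2 j) := by rw [hμ]; rfl
    rw [h2]; exact h1
  have hc2 : ∀ j : Fin (n - l.1), ν l ≤ hB.eigenvalues (gB j) := by
    intro j
    have h1 : ν l ≤ ν ⟨l.1 + j.1, by have := j.2; omega⟩ := hνmono (by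
      rw [Fin.le_def]
      simp)
    have h2 : hB.eigenvalues (gB j) = ν ⟨l.1 + j.1, by have := j.2; omega⟩ := by rw [hν]; rfl
    rw [h2]; exact h1
  have hAx : ⟪x, Matrix.toEuclideanLin A x⟫ ≤ μ l * ⟪x, x⟫ := quad_le hA gA (μ l) hc1 x hxU
  have hBx : ν l * ⟪x, x⟫ ≤ ⟪x, Matrix.toEuclideanLin B x⟫ := quad_ge hB gB (ν l) hc2 x hxV
  have hdiff : ⟪x, Matrix.toEuclideanLin (B - A) x⟫ ≤ (n : ℝ) * K * ⟪x, x⟫ :=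
    entry_bound (B - A) K hK0 (fun i j => by rw [Matrix.sub_apply, abs_sub_comm]; exact hK i j) x
  have hlin : ⟪x, Matrix.toEuclideanLin B x⟫
      = ⟪x, Matrix.toEuclideanLin A x⟫ + ⟪x, Matrix.toEuclideanLin (B - A) x⟫ := by
    rw [map_sub]
    rw [LinearMap.sub_apply, inner_sub_right]
    ring
  have hxx : (0:ℝ) < ⟪x, x⟫ := by
    rw [real_inner_self_eq_norm_sq]
    exact pow_pos (norm_pos_iff.mpr hx) 2
  have hfin : (ν l - μ l) * ⟪x, x⟫ ≤ ((n : ℝ) * K) * ⟪x, x⟫ := by nlinarith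
  exact le_of_mul_le_mul_right hfin hxx


/-- If `μ` and `ν` are the eigenvalues of the real symmetric matrices `A` and `B`, listed with
multiplicity in nondecreasing order, then `|μ l - ν l| ≤ n · max_{i,j} |A i j - B i j|` for
every `l`. -/
theorem stmt3 {n : ℕ} (A B : Matrix (Fin n) (Fin n) ℝ)
    (hA : A.IsHermitian) (hB : B.IsHermitian)
    (μ ν : Fin n → ℝ) (σA σB : Equiv.Perm (Fin n))
    (hμ : μ = hA.eigenvalues ∘ σA) (hμmono : Monotone μ)
    (hν : ν = hB.eigenvalues ∘ σB) (hνmono : Monotone ν) :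
    ∀ l : Fin n, |μ l - ν l| ≤ n * ⨆ i, ⨆ j, |A i j - B i j| := by
  intro l
  have h1 := weyl_aux A B hA hB μ ν σA σB hμ hμmono hν hνmono l
  have h2 := weyl_aux B A hB hA ν μ σB σA hν hνmono hμ hμmono l
  have e : (⨆ i, ⨆ j, |B i j - A i j|) = ⨆ i, ⨆ j, |A i j - B i j| := by
    apply congrArg
    funext i
    apply congrArg
    funext j
    exact abs_sub_comm _ _
  rw [e] at h2
  rw [abs_sub_le_iff]
  exact ⟨h2, h1⟩
end

section
/- Fix n ≥ 2, h > 0, x ∈ ℝⁿ, a function u : ℝⁿ → ℝ, and a real number f. For t ∈ ℝ, let u_t : ℝⁿ → ℝ be defined by u_t(y) = u(y) for y ≠ x and u_t(x) = t. Then the function t ↦ (Δ_d u_t(x))² + (1/c(2,n)) · (f − S_2(H_d u_t(x))) is constant on ℝ, i.e., its value does not depend on t. -/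
/-- `Sk k A` is the sum of all `k × k` principal minors of the matrix `A`. -/
noncomputable def Sk {n : ℕ} (k : ℕ) (A : Matrix (Fin n) (Fin n) ℝ) : ℝ :=
  ∑ s ∈ Finset.univ.powersetCard k,
    (A.submatrix (fun i : {x : Fin n // x ∈ s} => i.1) (fun j : {x : Fin n // x ∈ s} => j.1)).det

/-- The `i`-th standard basis vector of `ℝⁿ`. -/
noncomputable def evec {n : ℕ} (i : Fin n) : Fin n → ℝ := Pi.single i 1

/-- Discrete Laplacian of `u : ℝⁿ → ℝ` at `x` with mesh size `h`. -/
noncomputable def discLap {n : ℕ} (h : ℝ) (u : (Fin n → ℝ) → ℝ) (x : Fin n → ℝ) : ℝ :=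
  ∑ i, (u (x + h • evec i) - 2 * u x + u (x - h • evec i)) / h ^ 2

/-- Discrete Hessian of `u : ℝⁿ → ℝ` at `x` with mesh size `h`: central second differences on
the diagonal and central mixed second differences off the diagonal. -/
noncomputable def discHess {n : ℕ} (h : ℝ) (u : (Fin n → ℝ) → ℝ) (x : Fin n → ℝ) :
    Matrix (Fin n) (Fin n) ℝ :=
  fun i j =>
    if i = j then (u (x + h • evec i) - 2 * u x + u (x - h • evec i)) / h ^ 2
    else (u (x + h • evec i + h • evec j) + u (x - h • evec i - h • evec j)
        - u (x + h • evec i - h • evec j) - u (x - h • evec i + h • evec j)) / (4 * h ^ 2)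


lemma det_sub_two {n : ℕ} {s : Finset (Fin n)} {i j : Fin n} (hij : i ≠ j)
    (hs : s = {i, j}) (M : Matrix (Fin n) (Fin n) ℝ) :
    (M.submatrix (fun a : {x : Fin n // x ∈ s} => a.1) (fun a : {x : Fin n // x ∈ s} => a.1)).det
      = M i i * M j j - M i j * M j i := by
  subst hs
  have hi : i ∈ ({i, j} : Finset (Fin n)) := by simp
  have hj : j ∈ ({i, j} : Finset (Fin n)) := by simp
  let e : Fin 2 ≃ {x : Fin n // x ∈ ({i, j} : Finset (Fin n))} :=
    { toFun := ![⟨i, hi⟩, ⟨j, hj⟩]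
      invFun := fun a => if a.1 = i then 0 else 1
      left_inv := by
        intro a
        fin_cases a <;> simp [hij, Ne.symm hij]
      right_inv := by
        rintro ⟨a, ha⟩
        simp only [Finset.mem_insert, Finset.mem_singleton] at ha
        rcases ha with rfl | rfl
        · simp
        · simp [Ne.symm hij] }
  rw [← Matrix.det_submatrix_equiv_self e, Matrix.det_fin_two]
  simp [e, Matrix.submatrix_apply]

lemma card_pairs_mem {n : ℕ} (i : Fin n) :
    ((Finset.univ.powersetCard 2).filter (fun s : Finset (Fin n) => i ∈ s)).card = n - 1 := by
  have : ((Finset.univ.powersetCard 2).filter (fun s : Finset (Fin n) => i ∈ s)).card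
      = ((Finset.univ.erase i).powersetCard 1).card := by
    apply Finset.card_bij (fun s _ => s.erase i)
    · intro s hs
      simp only [Finset.mem_filter, Finset.mem_powersetCard] at hs
      simp only [Finset.mem_powersetCard]
      constructor
      · intro a ha
        simp only [Finset.mem_erase] at ha ⊢
        exact ⟨ha.1, Finset.mem_univ _⟩
      · rw [Finset.card_erase_of_mem hs.2, hs.1.2]
    · intro s hs s' hs' hE
      simp only [Finset.mem_filter] at hs hs'
      rw [← Finset.insert_erase hs.2, ← Finset.insert_erase hs'.2, hE]
    · intro t ht
      simp only [Finset.mem_powersetCard] at ht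
      have hit : i ∉ t := fun hmem => (Finset.mem_erase.mp (ht.1 hmem)).1 rfl
      refine ⟨insert i t, ?_, by rw [Finset.erase_insert hit]⟩
      simp only [Finset.mem_filter, Finset.mem_powersetCard]
      exact ⟨⟨Finset.subset_univ _, by rw [Finset.card_insert_of_notMem hit, ht.2]⟩,
        Finset.mem_insert_self _ _⟩
  rw [this, Finset.card_powersetCard, Finset.card_erase_of_mem (Finset.mem_univ i),
    Finset.card_univ, Fintype.card_fin, Nat.choose_one_right]

lemma sum_pairs_diag {n : ℕ} (g : Fin n → ℝ) :
    ∑ s ∈ Finset.univ.powersetCard 2, ∑ k ∈ s, g k = (n - 1 : ℕ) * ∑ k, g k := by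
  have h1 : ∀ s ∈ Finset.univ.powersetCard 2,
      ∑ k ∈ s, g k = ∑ k, if k ∈ s then g k else 0 := by
    intro s _
    rw [Finset.sum_ite_mem, Finset.univ_inter]
  rw [Finset.sum_congr rfl h1, Finset.sum_comm, Finset.mul_sum]
  refine Finset.sum_congr rfl fun k _ => ?_
  rw [← Finset.sum_filter, Finset.sum_const, card_pairs_mem, nsmul_eq_mul]

lemma Sk2_add_smul_one {n : ℕ} (A : Matrix (Fin n) (Fin n) ℝ) (δ : ℝ) :
    Sk 2 (A + δ • (1 : Matrix (Fin n) (Fin n) ℝ))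
      = Sk 2 A + δ * ((n - 1 : ℕ) * Matrix.trace A) + (n.choose 2 : ℕ) * δ ^ 2 := by
  unfold Sk
  have key : ∀ s ∈ Finset.univ.powersetCard 2,
      ((A + δ • (1 : Matrix (Fin n) (Fin n) ℝ)).submatrix
          (fun i : {x : Fin n // x ∈ s} => i.1) (fun j : {x : Fin n // x ∈ s} => j.1)).det
        = (A.submatrix (fun i : {x : Fin n // x ∈ s} => i.1)
            (fun j : {x : Fin n // x ∈ s} => j.1)).det
          + (δ * ∑ k ∈ s, A k k + δ ^ 2) := by
    intro s hs
    have hcard : s.card = 2 := (Finset.mem_powersetCard.mp hs).2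
    obtain ⟨i, j, hij, rfl⟩ := Finset.card_eq_two.mp hcard
    rw [det_sub_two hij rfl, det_sub_two hij rfl, Finset.sum_pair hij]
    have h1 : ∀ k, (A + δ • (1 : Matrix (Fin n) (Fin n) ℝ)) k k = A k k + δ := by
      intro k; simp [Matrix.add_apply, Matrix.smul_apply, Matrix.one_apply]
    have h2 : (A + δ • (1 : Matrix (Fin n) (Fin n) ℝ)) i j = A i j := by
      simp [Matrix.add_apply, Matrix.smul_apply, Matrix.one_apply, hij]
    have h3 : (A + δ • (1 : Matrix (Fin n) (Fin n) ℝ)) j i = A j i := by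
      simp [Matrix.add_apply, Matrix.smul_apply, Matrix.one_apply, Ne.symm hij]
    rw [h1, h1, h2, h3]; ring
  rw [Finset.sum_congr rfl key, Finset.sum_add_distrib, Finset.sum_add_distrib,
    ← Finset.mul_sum, sum_pairs_diag, Finset.sum_const, Finset.card_powersetCard,
    Finset.card_univ, Fintype.card_fin, nsmul_eq_mul]
  unfold Matrix.trace Matrix.diag
  ring


/-- For `u_t` obtained from `u` by redefining its value at the grid point `x` to be `t`, the
quantity `(Δ_d u_t(x))² + (1/c(2,n)) (f - S_2(H_d u_t(x)))` does not depend on `t`, where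
`c(2,n) = C(n,2)/n²`. -/
theorem stmt10 {n : ℕ} (hn : 2 ≤ n) (h : ℝ) (hh : 0 < h) (x : Fin n → ℝ)
    (u : (Fin n → ℝ) → ℝ) (f : ℝ) :
    ∀ t₁ t₂ : ℝ,
      (discLap h (Function.update u x t₁) x) ^ 2
          + 1 / ((n.choose 2 : ℝ) / (n : ℝ) ^ 2)
            * (f - Sk 2 (discHess h (Function.update u x t₁) x))
        = (discLap h (Function.update u x t₂) x) ^ 2
          + 1 / ((n.choose 2 : ℝ) / (n : ℝ) ^ 2)
            * (f - Sk 2 (discHess h (Function.update u x t₂) x)) := by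
  intro t₁ t₂
  have hh0 : h ≠ 0 := ne_of_gt hh
  have hh2 : h ^ 2 ≠ 0 := pow_ne_zero _ hh0
  obtain ⟨δ, hδ⟩ : ∃ δ : ℝ, δ = -2 * (t₁ - t₂) / h ^ 2 := ⟨_, rfl⟩
  -- points distinct from x
  have nep : ∀ i : Fin n, x + h • evec i ≠ x := by
    intro i hc
    have := congrFun hc i
    simp [evec, Pi.single_eq_same] at this
    exact hh0 this
  have nem : ∀ i : Fin n, x - h • evec i ≠ x := by
    intro i hc
    have := congrFun hc i
    simp [evec, Pi.single_eq_same] at this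
    exact hh0 this
  have ne1 : ∀ i j : Fin n, i ≠ j → x + h • evec i + h • evec j ≠ x := by
    intro i j hij hc
    have := congrFun hc i
    simp [evec, Pi.single_eq_same, Pi.single_eq_of_ne hij] at this
    exact hh0 this
  have ne2 : ∀ i j : Fin n, i ≠ j → x - h • evec i - h • evec j ≠ x := by
    intro i j hij hc
    have := congrFun hc i
    simp [evec, Pi.single_eq_same, Pi.single_eq_of_ne hij] at this
    exact hh0 this
  have ne3 : ∀ i j : Fin n, i ≠ j → x + h • evec i - h • evec j ≠ x := by
    intro i j hij hc
    have := congrFun hc i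
    simp [evec, Pi.single_eq_same, Pi.single_eq_of_ne hij] at this
    exact hh0 this
  have ne4 : ∀ i j : Fin n, i ≠ j → x - h • evec i + h • evec j ≠ x := by
    intro i j hij hc
    have := congrFun hc i
    simp [evec, Pi.single_eq_same, Pi.single_eq_of_ne hij] at this
    exact hh0 this
  -- Hessian shift
  have hHess : discHess h (Function.update u x t₁) x
      = discHess h (Function.update u x t₂) x + δ • (1 : Matrix (Fin n) (Fin n) ℝ) := by
    ext i j
    by_cases hij : i = j
    · subst hij
      simp only [discHess, if_pos rfl, ↓reduceIte, Matrix.add_apply, Matrix.smul_apply,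
        Matrix.one_apply_eq, smul_eq_mul, mul_one]
      rw [Function.update_of_ne (nep i), Function.update_of_ne (nem i),
        Function.update_of_ne (nep i), Function.update_of_ne (nem i),
        Function.update_self, Function.update_self, hδ]
      field_simp
      ring
    · simp only [discHess, if_neg hij, Matrix.add_apply, Matrix.smul_apply,
        Matrix.one_apply_ne hij, smul_eq_mul, mul_zero, add_zero]
      rw [Function.update_of_ne (ne1 i j hij), Function.update_of_ne (ne2 i j hij),
        Function.update_of_ne (ne3 i j hij), Function.update_of_ne (ne4 i j hij),
        Function.update_of_ne (ne1 i j hij), Function.update_of_ne (ne2 i j hij),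
        Function.update_of_ne (ne3 i j hij), Function.update_of_ne (ne4 i j hij)]
  -- Laplacian shift
  have hLap : discLap h (Function.update u x t₁) x
      = discLap h (Function.update u x t₂) x + n * δ := by
    unfold discLap
    have : ∀ i : Fin n,
        (Function.update u x t₁ (x + h • evec i) - 2 * Function.update u x t₁ x
          + Function.update u x t₁ (x - h • evec i)) / h ^ 2
        = (Function.update u x t₂ (x + h • evec i) - 2 * Function.update u x t₂ x
          + Function.update u x t₂ (x - h • evec i)) / h ^ 2 + δ := by
      intro i
      rw [Function.update_of_ne (nep i), Function.update_of_ne (nem i),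
        Function.update_of_ne (nep i), Function.update_of_ne (nem i),
        Function.update_self, Function.update_self, hδ]
      field_simp
      ring
    rw [Finset.sum_congr rfl (fun i _ => this i), Finset.sum_add_distrib,
      Finset.sum_const, Finset.card_univ, Fintype.card_fin, nsmul_eq_mul]
  -- trace equals Laplacian
  have hTr : Matrix.trace (discHess h (Function.update u x t₂) x)
      = discLap h (Function.update u x t₂) x := by
    unfold Matrix.trace Matrix.diag discHess discLap
    refine Finset.sum_congr rfl fun i _ => ?_
    rw [if_pos rfl]
  rw [hHess, hLap, Sk2_add_smul_one, hTr]
  -- numeric facts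
  have hn1 : 1 ≤ n := le_trans (by norm_num) hn
  have hcast : ((n - 1 : ℕ) : ℝ) = (n : ℝ) - 1 := by
    push_cast [Nat.cast_sub hn1]
    ring
  have hCn : (n.choose 2 : ℕ) * 2 = n * (n - 1) := by
    rw [Nat.choose_two_right, Nat.div_mul_cancel (Nat.even_mul_pred_self n).two_dvd]
  have hC2 : (n.choose 2 : ℝ) * 2 = (n : ℝ) * ((n : ℝ) - 1) := by
    have := congrArg (fun m : ℕ => (m : ℝ)) hCn
    push_cast [Nat.cast_sub hn1] at this
    linarith
  have hCpos : 0 < n.choose 2 := Nat.choose_pos hn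
  have hC0 : (n.choose 2 : ℝ) ≠ 0 := Nat.cast_ne_zero.mpr hCpos.ne'
  have hn0 : (n : ℝ) ≠ 0 := Nat.cast_ne_zero.mpr (by omega)
  rw [hcast, one_div_div]
  set L := discLap h (Function.update u x t₂) x
  set S := Sk 2 (discHess h (Function.update u x t₂) x)
  field_simp
  linear_combination ((n : ℝ) * δ * L) * hC2
end

section
/- Let h > 0, x ∈ ℝ, and let v : ℝ → ℝ be four times continuously differentiable on the interval [x−h, x+h]. Then |v''(x) − (v(x+h) − 2v(x) + v(x−h))/h²| ≤ (h²/12) · sup_{t ∈ [x−h, x+h]} |v⁽⁴⁾(t)|. -/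
open Set Topology

/-- Iterated derivatives within a subset with unique diff agree with those on a bigger set. -/
lemma iterSub {f : ℝ → ℝ} {s t : Set ℝ} {N : WithTop ℕ∞} (hf : ContDiffOn ℝ N f s)
    (hus : UniqueDiffOn ℝ s) (hut : UniqueDiffOn ℝ t) (hts : t ⊆ s) {m : ℕ}
    (hm : (m : WithTop ℕ∞) ≤ N) {y : ℝ} (hy : y ∈ t) :
    iteratedDerivWithin m f t y = iteratedDerivWithin m f s y := by
  have H := (hf.ftaylorSeriesWithin hus).mono hts
  have h1 := H.eq_iteratedFDerivWithin_of_uniqueDiffOn hm hut hy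
  have h2 : ftaylorSeriesWithin ℝ f s y m = iteratedFDerivWithin ℝ m f s y := rfl
  rw [iteratedDerivWithin_eq_iteratedFDerivWithin, iteratedDerivWithin_eq_iteratedFDerivWithin,
    ← h1, h2]

/-- Reflection formula for iterated derivatives within an interval. -/
lemma reflIter {f : ℝ → ℝ} {c p q : ℝ} (hpq : p < q) {N : WithTop ℕ∞}
    (hf : ContDiffOn ℝ N f (Icc (c - q) (c - p))) :
    ∀ (n : ℕ), (n : WithTop ℕ∞) ≤ N → ∀ y ∈ Icc p q,
      iteratedDerivWithin n (fun z => f (c - z)) (Icc p q) y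
        = (-1 : ℝ) ^ n * iteratedDerivWithin n f (Icc (c - q) (c - p)) (c - y) := by
  have hcq : c - q < c - p := by linarith
  intro n
  induction n with
  | zero => intro _ y hy; simp
  | succ n IH =>
    intro hn y hy
    have hn' : (n : WithTop ℕ∞) ≤ N := le_trans (by exact_mod_cast Nat.cast_le.mpr n.le_succ) hn
    have hu : UniqueDiffOn ℝ (Icc p q) := uniqueDiffOn_Icc hpq
    have hu' : UniqueDiffOn ℝ (Icc (c - q) (c - p)) := uniqueDiffOn_Icc hcq
    have hcy : c - y ∈ Icc (c - q) (c - p) := ⟨by linarith [hy.2], by linarith [hy.1]⟩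
    set F := iteratedDerivWithin n f (Icc (c - q) (c - p)) with hF
    -- outer derivative
    have hnlt : (n : WithTop ℕ∞) < N := lt_of_lt_of_le (by exact_mod_cast Nat.cast_lt.mpr n.lt_succ_self) hn
    have hdF : DifferentiableWithinAt ℝ F (Icc (c - q) (c - p)) (c - y) :=
      (hf.differentiableOn_iteratedDerivWithin hnlt hu') _ hcy
    have houter : HasDerivWithinAt F
        (iteratedDerivWithin (n + 1) f (Icc (c - q) (c - p)) (c - y)) (Icc (c - q) (c - p)) (c - y) := by
      have := hdF.hasDerivWithinAt
      rwa [show derivWithin F (Icc (c - q) (c - p)) (c - y)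
          = iteratedDerivWithin (n + 1) f (Icc (c - q) (c - p)) (c - y) from
        (congrFun iteratedDerivWithin_succ (c - y)).symm] at this
    have hinner : HasDerivWithinAt (fun z : ℝ => c - z) (-1) (Icc p q) y := by
      simpa using (hasDerivWithinAt_id y (Icc p q)).const_sub c
    have hmaps : MapsTo (fun z : ℝ => c - z) (Icc p q) (Icc (c - q) (c - p)) := by
      intro z hz; simp only [mem_Icc] at hz ⊢; constructor <;> linarith
    have hcomp : HasDerivWithinAt (fun z => (-1 : ℝ) ^ n * F (c - z))
        ((-1 : ℝ) ^ n * (iteratedDerivWithin (n + 1) f (Icc (c - q) (c - p)) (c - y) * -1))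
        (Icc p q) y := (houter.comp y hinner hmaps).const_mul ((-1 : ℝ) ^ n)
    have hEq : Set.EqOn (iteratedDerivWithin n (fun z => f (c - z)) (Icc p q))
        (fun z => (-1 : ℝ) ^ n * F (c - z)) (Icc p q) := fun z hz => IH hn' z hz
    rw [iteratedDerivWithin_succ,
      derivWithin_congr hEq (hEq hy), hcomp.derivWithin (hu _ hy)]
    ring

lemma taylorLagOld {f : ℝ → ℝ} {x x₀ : ℝ} {n : ℕ} (hx : x₀ < x)
    (hf : ContDiffOn ℝ n f (Icc x₀ x))
    (hf' : DifferentiableOn ℝ (iteratedDerivWithin n f (Icc x₀ x)) (Ioo x₀ x)) :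
    ∃ x' ∈ Ioo x₀ x, f x - taylorWithinEval f n (Icc x₀ x) x₀ x =
      iteratedDerivWithin (n + 1) f (Icc x₀ x) x' * (x - x₀) ^ (n + 1) / Nat.factorial (n + 1) := by
  have := taylor_mean_remainder_lagrange (n := n) hx.ne
    (by rw [uIcc_of_le hx.le]; exact hf) (by rw [uIcc_of_le hx.le, uIoo_of_le hx.le]; exact hf')
  rw [uIcc_of_le hx.le, uIoo_of_le hx.le] at this
  exact this

/-- For `v` four times continuously differentiable on `[x-h, x+h]`, the central second
difference quotient approximates `v''(x)` with error at most
`(h²/12) sup_{t ∈ [x-h,x+h]} |v⁽⁴⁾(t)|`. -/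
theorem stmt12 (h x : ℝ) (hh : 0 < h) (v : ℝ → ℝ)
    (hv : ContDiffOn ℝ 4 v (Set.Icc (x - h) (x + h))) :
    |deriv (deriv v) x - (v (x + h) - 2 * v x + v (x - h)) / h ^ 2|
      ≤ h ^ 2 / 12 *
        ⨆ t : Set.Icc (x - h) (x + h),
          |iteratedDerivWithin 4 v (Set.Icc (x - h) (x + h)) t| := by
  have hab : x - h < x + h := by linarith
  set s : Set ℝ := Set.Icc (x - h) (x + h) with hs
  have hus : UniqueDiffOn ℝ s := uniqueDiffOn_Icc hab
  set C := ⨆ t : s, |iteratedDerivWithin 4 v s t| with hC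
  have hcont : ContinuousOn (iteratedDerivWithin 4 v s) s :=
    hv.continuousOn_iteratedDerivWithin le_rfl hus
  have hbdd : BddAbove (Set.range fun t : s => |iteratedDerivWithin 4 v s t|) := by
    have hsubr : (Set.range fun t : s => |iteratedDerivWithin 4 v s t|)
        ⊆ (fun y => |iteratedDerivWithin 4 v s y|) '' s := by
      rintro _ ⟨t, rfl⟩; exact Set.mem_image_of_mem _ t.2
    exact BddAbove.mono hsubr (isCompact_Icc.image_of_continuousOn hcont.abs).bddAbove
  have hCle : ∀ y ∈ s, |iteratedDerivWithin 4 v s y| ≤ C := fun y hy =>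
    le_ciSup hbdd (⟨y, hy⟩ : s)
  -- right interval
  have hxb : x < x + h := by linarith
  have hsubP : Icc x (x + h) ⊆ s := Icc_subset_Icc (by linarith) le_rfl
  have huP : UniqueDiffOn ℝ (Icc x (x + h)) := uniqueDiffOn_Icc hxb
  have hvP : ContDiffOn ℝ 4 v (Icc x (x + h)) := hv.mono hsubP
  obtain ⟨ξP, hξP, hRP⟩ := taylorLagOld (n := 3) hxb
    (hvP.of_le (by norm_num))
    ((hvP.differentiableOn_iteratedDerivWithin (by norm_num) huP).mono Ioo_subset_Icc_self)
  -- left interval via reflection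
  have hsubM : Icc (x - h) x ⊆ s := Icc_subset_Icc le_rfl (by linarith)
  have hax : x - h < x := by linarith
  have huM : UniqueDiffOn ℝ (Icc (x - h) x) := uniqueDiffOn_Icc hax
  have hvM : ContDiffOn ℝ 4 v (Icc (x - h) x) := hv.mono hsubM
  have hceq1 : 2 * x - (x + h) = x - h := by ring
  have hceq2 : 2 * x - x = x := by ring
  have hvM' : ContDiffOn ℝ 4 v (Icc (2 * x - (x + h)) (2 * x - x)) := by
    rw [hceq1, hceq2]; exact hvM
  have hrefl := reflIter hxb hvM'
  set w : ℝ → ℝ := fun z => v (2 * x - z) with hw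
  have hmapsw : MapsTo (fun z : ℝ => 2 * x - z) (Icc x (x + h)) (Icc (x - h) x) := by
    intro z hz; simp only [mem_Icc] at hz ⊢; constructor <;> linarith
  have hwc : ContDiffOn ℝ 4 w (Icc x (x + h)) :=
    hvM.comp ((contDiff_const.sub contDiff_id).contDiffOn) hmapsw
  obtain ⟨ξM, hξM, hRM⟩ := taylorLagOld (n := 3) (f := w) hxb
    (hwc.of_le (by norm_num))
    ((hwc.differentiableOn_iteratedDerivWithin (by norm_num) huP).mono Ioo_subset_Icc_self)
  -- identify derivatives at x
  set d : ℕ → ℝ := fun k => iteratedDerivWithin k v s x with hd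
  have hxmem : x ∈ s := ⟨by linarith, by linarith⟩
  have hxmemP : x ∈ Icc x (x + h) := ⟨le_rfl, by linarith⟩
  have hxmemM : x ∈ Icc (x - h) x := ⟨by linarith, le_rfl⟩
  have AP : ∀ (k : ℕ), k ≤ 4 → iteratedDerivWithin k v (Icc x (x + h)) x = d k := by
    intro k hk
    exact iterSub hv hus huP hsubP (by exact_mod_cast Nat.cast_le.mpr hk) hxmemP
  have AM : ∀ (k : ℕ), k ≤ 4 → iteratedDerivWithin k v (Icc (x - h) x) x = d k := by
    intro k hk
    exact iterSub hv hus huM hsubM (by exact_mod_cast Nat.cast_le.mpr hk) hxmemM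
  have Aw : ∀ (k : ℕ), k ≤ 4 → iteratedDerivWithin k w (Icc x (x + h)) x = (-1 : ℝ) ^ k * d k := by
    intro k hk
    have := hrefl k (by exact_mod_cast Nat.cast_le.mpr hk) x hxmemP
    rw [hceq1, hceq2] at this
    rw [this, AM k hk]
  -- remainder bounds
  have hξPs : ξP ∈ s := hsubP (Ioo_subset_Icc_self hξP)
  have hEP : iteratedDerivWithin 4 v (Icc x (x + h)) ξP = iteratedDerivWithin 4 v s ξP :=
    iterSub hv hus huP hsubP le_rfl (Ioo_subset_Icc_self hξP)
  have hrξ : 2 * x - ξM ∈ Icc (x - h) x := hmapsw (Ioo_subset_Icc_self hξM)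
  have hEM : iteratedDerivWithin 4 w (Icc x (x + h)) ξM
      = iteratedDerivWithin 4 v s (2 * x - ξM) := by
    have := hrefl 4 le_rfl ξM (Ioo_subset_Icc_self hξM)
    rw [hceq1, hceq2] at this
    rw [this, iterSub hv hus huM hsubM le_rfl hrξ]
    norm_num
  -- Taylor polynomial values
  rw [taylor_within_apply] at hRP hRM
  have hwb : w (x + h) = v (x - h) := by rw [hw]; simp [hceq1]
  simp only [Finset.sum_range_succ, Finset.sum_range_zero, smul_eq_mul] at hRP hRM
  rw [AP 0 (by norm_num), AP 1 (by norm_num), AP 2 (by norm_num), AP 3 (by norm_num),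
    hEP] at hRP
  rw [hwb, Aw 0 (by norm_num), Aw 1 (by norm_num), Aw 2 (by norm_num), Aw 3 (by norm_num),
    hEM] at hRM
  -- second derivative identification
  have hsnb : s ∈ 𝓝 x := Icc_mem_nhds (by linarith) (by linarith)
  have hdd : deriv (deriv v) x = d 2 := by
    have h1 : iteratedDeriv 2 v x = deriv (deriv v) x := by
      rw [show (2 : ℕ) = 1 + 1 from rfl, iteratedDeriv_succ, iteratedDeriv_one]
    have h2 : iteratedDeriv 2 v x = d 2 := by
      rw [← iteratedDerivWithin_univ, hd]
      simp only [iteratedDerivWithin_eq_iteratedFDerivWithin]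
      congr 1
      have := iteratedFDerivWithin_inter (𝕜 := ℝ) (f := v) (s := Set.univ) (n := 2) hsnb
      rw [Set.univ_inter] at this
      exact this.symm
    rw [← h1, h2]
  -- abbreviate remainder values
  set eP := iteratedDerivWithin 4 v s ξP with heP
  set eM := iteratedDerivWithin 4 v s (2 * x - ξM) with heM
  have hboundP : |eP| ≤ C := hCle _ hξPs
  have hboundM : |eM| ≤ C := hCle _ (hsubM hrξ)
  -- algebra
  have hd0 : d 0 = v x := by rw [hd]; simp
  have hh2 : (0 : ℝ) < h ^ 2 := by positivity
  have key : deriv (deriv v) x - (v (x + h) - 2 * v x + v (x - h)) / h ^ 2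
      = -(eP + eM) * h ^ 2 / 24 := by
    rw [hdd]
    have hvb : v (x + h) = d 0 + h * d 1 + h ^ 2 / 2 * d 2 + h ^ 3 / 6 * d 3 + eP * h ^ 4 / 24 := by
      have : (x + h - x) = h := by ring
      rw [this] at hRP
      norm_num [Nat.factorial] at hRP
      linarith [hRP]
    have hva : v (x - h) = d 0 - h * d 1 + h ^ 2 / 2 * d 2 - h ^ 3 / 6 * d 3 + eM * h ^ 4 / 24 := by
      have : (x + h - x) = h := by ring
      rw [this] at hRM
      norm_num [Nat.factorial] at hRM
      linarith [hRM]
    rw [hvb, hva, hd0]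
    field_simp
    ring
  rw [key]
  have habs : |(-(eP + eM)) * h ^ 2 / 24| ≤ 2 * C * h ^ 2 / 24 := by
    rw [abs_div, abs_mul]
    have h1 : |(-(eP + eM))| ≤ 2 * C := by
      rw [abs_neg]
      calc |eP + eM| ≤ |eP| + |eM| := abs_add_le _ _
        _ ≤ 2 * C := by linarith
    have h2 : |h ^ 2| = h ^ 2 := abs_of_pos hh2
    have h3 : |(24 : ℝ)| = 24 := by norm_num
    rw [h2, h3]
    have h4 := mul_le_mul_of_nonneg_right h1 (le_of_lt hh2)
    linarith
  calc |(-(eP + eM)) * h ^ 2 / 24| ≤ 2 * C * h ^ 2 / 24 := habs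
    _ = h ^ 2 / 12 * C := by ring
end
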